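/- Let W be a finite Coxeter group, w ∈ W, and let x₀ be the minimal-length element of the double coset X = W_{D_L(w)} w W_{D_R(w)}. Then for every x ∈ X, the number of Bruhat-graph edges entering x from outside X equals ℓ(x₀); that is, |{y ∈ W \ X : y → x}| = ℓ(x₀). -/

import Mathlib

open CoxeterSystem List

variable {B W : Type*} [Group W] {M : CoxeterMatrix B}

/-- A directed edge of the Bruhat graph: `v = t * u` for a reflection `t`, with length increase. -/
def bruhatEdge (cs : CoxeterSystem M W) (u v : W) : Prop :=
  ∃ t : W, cs.IsReflection t ∧ v = t * u ∧ cs.length u < cs.length v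

/-- Bruhat order: reflexive-transitive closure of Bruhat edges. -/
def bruhatLE (cs : CoxeterSystem M W) : W → W → Prop :=
  Relation.ReflTransGen (bruhatEdge cs)

/-- The standard parabolic subgroup generated by the simple reflections indexed by `I`. -/
def parabolic (cs : CoxeterSystem M W) (I : Set B) : Subgroup W :=
  Subgroup.closure (cs.simple '' I)

/-- The parabolic double coset `W_I x W_J`. -/
def doubleCoset (cs : CoxeterSystem M W) (I J : Set B) (x : W) : Set W :=
  {w | ∃ u ∈ parabolic cs I, ∃ v ∈ parabolic cs J, w = u * x * v}


namespace InDegreeAux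

attribute [local instance] Classical.propDecidable

variable {B W : Type*} [Group W] {M : CoxeterMatrix B} (cs : CoxeterSystem M W)

local prefix:100 "s" => cs.simple
local prefix:100 "π" => cs.wordProd
local prefix:100 "ℓ" => cs.length
local prefix:100 "ris" => cs.rightInvSeq

/-- The sign permutation attached to a simple reflection. -/
noncomputable def sigmaFun (i : B) : W × ℤˣ → W × ℤˣ :=
  fun p => (s i * p.1 * s i, p.2 * (if p.1 = s i then -1 else 1))

lemma sigmaFun_involutive (i : B) : Function.Involutive (sigmaFun cs i) := by
  rintro ⟨t, ε⟩
  simp only [sigmaFun]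
  have h : s i * (s i * t * s i) * s i = t := by
    simp [mul_assoc, cs.simple_mul_simple_cancel_left, cs.simple_mul_simple_cancel_right]
  have h2 : (s i * t * s i = s i) ↔ (t = s i) := by
    constructor
    · intro h'
      have := congrArg (fun z => s i * z * s i) h'
      simpa [mul_assoc, cs.simple_mul_simple_cancel_left] using this
    · rintro rfl; simp [cs.simple_mul_simple_cancel_right]
  rw [Prod.ext_iff]
  constructor
  · exact h
  · simp only [h2]
    by_cases ht : t = s i <;> simp [ht]

/-- The sign permutation attached to a simple reflection, as a permutation. -/
noncomputable def sigma (i : B) : Equiv.Perm (W × ℤˣ) := (sigmaFun_involutive cs i).toPerm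

lemma sigma_apply (i : B) (t : W) (ε : ℤˣ) :
    sigma cs i (t, ε) = (s i * t * s i, ε * (if t = s i then -1 else 1)) := rfl

lemma sigmaProd (ω : List B) (t : W) (ε : ℤˣ) :
    ((ω.map (sigma cs)).prod) (t, ε) =
      (π ω * t * (π ω)⁻¹, ε * (-1 : ℤˣ) ^ (List.count t (ris ω))) := by
  induction ω generalizing t ε with
  | nil => simp
  | cons i ω ih =>
    have hris : ris (i :: ω) = ((π ω)⁻¹ * (s i) * (π ω)) :: ris ω := rfl
    rw [List.map_cons, List.prod_cons, Equiv.Perm.mul_apply, ih, sigma_apply, hris,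
      cs.wordProd_cons]
    have hiff : (π ω * t * (π ω)⁻¹ = s i) ↔ (t = (π ω)⁻¹ * s i * π ω) := by
      constructor
      · intro h
        have := congrArg (fun z => (π ω)⁻¹ * z * (π ω)) h
        simpa [mul_assoc] using this
      · rintro rfl; simp [mul_assoc]
    rw [Prod.ext_iff]
    constructor
    · simp [mul_assoc]
    · simp only [List.count_cons]
      by_cases ht : t = (π ω)⁻¹ * s i * π ω
      · simp [hiff, ht, pow_succ, mul_assoc]
      · have h3 : ¬ (π ω * t * (π ω)⁻¹ = s i) := by rwa [hiff]
        rw [if_neg h3]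
        simp only [beq_iff_eq]
        rw [if_neg (show ¬ ((π ω)⁻¹ * s i * π ω = t) from fun h => ht h.symm)]
        simp

section Dihedral

variable (i j : B)

lemma comm_zpow (a : ℤ) : s j * (s i * s j) ^ a = (s i * s j) ^ (-a) * s j := by
  have h : (MulAut.conj (s j)) (s i * s j) = (s i * s j)⁻¹ := by
    simp only [MulAut.conj_apply, cs.inv_simple, mul_inv_rev]
    rw [mul_assoc, mul_assoc, cs.simple_mul_simple_self, mul_one]
  have h2 : (MulAut.conj (s j)) ((s i * s j) ^ a) = (s i * s j) ^ (-a) := by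
    rw [map_zpow, h, inv_zpow, ← zpow_neg]
  simp only [MulAut.conj_apply, cs.inv_simple] at h2
  calc s j * (s i * s j) ^ a = (s j * (s i * s j) ^ a * s j) * s j := by
        rw [mul_assoc, cs.simple_mul_simple_self, mul_one]
    _ = (s i * s j) ^ (-a) * s j := by rw [h2]

lemma comm_zpow' (a : ℤ) : s i * (s i * s j) ^ a = (s i * s j) ^ (-a) * s i := by
  have h : (MulAut.conj (s i)) (s i * s j) = (s i * s j)⁻¹ := by
    simp only [MulAut.conj_apply, cs.inv_simple, mul_inv_rev]
    rw [← mul_assoc, cs.simple_mul_simple_self, one_mul]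
  have h2 : (MulAut.conj (s i)) ((s i * s j) ^ a) = (s i * s j) ^ (-a) := by
    rw [map_zpow, h, inv_zpow, ← zpow_neg]
  simp only [MulAut.conj_apply, cs.inv_simple] at h2
  calc s i * (s i * s j) ^ a = (s i * (s i * s j) ^ a * s i) * s i := by
        rw [mul_assoc, cs.simple_mul_simple_self, mul_one]
    _ = (s i * s j) ^ (-a) * s i := by rw [h2]

lemma e_formula (p : ℕ) :
    (π (alternatingWord i j p))⁻¹ * s (if Even p then j else i) * π (alternatingWord i j p)
      = (s i * s j) ^ (-(p : ℤ)) * s j := by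
  rw [cs.prod_alternatingWord_eq_mul_pow]
  by_cases hp : Even p
  · obtain ⟨c, hc⟩ := hp
    have hdiv : p / 2 = c := by omega
    have harith : (-(c:ℤ)) + (-(c:ℤ)) = -(p : ℤ) := by omega
    rw [if_pos ⟨c, hc⟩, if_pos ⟨c, hc⟩, hdiv, one_mul,
      ← zpow_natCast (s i * s j) c, ← zpow_neg, mul_assoc, comm_zpow cs i j,
      ← mul_assoc, ← zpow_add, harith]
  · obtain ⟨c, hc⟩ := Nat.not_even_iff_odd.mp hp
    have hdiv : p / 2 = c := by omega
    have harith' : (-(c:ℤ)) + (-(c:ℤ)) + (-1) = -(p : ℤ) := by omega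
    have hq1 : s j * (s i * s j) = (s i * s j) ^ (-1 : ℤ) * s j := by
      simpa using comm_zpow cs i j 1
    rw [if_neg hp, if_neg hp, hdiv, ← zpow_natCast (s i * s j) c]
    rw [mul_inv_rev, ← zpow_neg, cs.inv_simple]
    calc (s i * s j) ^ (-(c:ℤ)) * s j * s i * (s j * (s i * s j) ^ (c:ℤ))
        = (s i * s j) ^ (-(c:ℤ)) * s j * s i * ((s i * s j) ^ (-(c:ℤ)) * s j) := by
          rw [comm_zpow cs i j]
      _ = (s i * s j) ^ (-(c:ℤ)) * s j * (s i * (s i * s j) ^ (-(c:ℤ))) * s j := by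
          group
      _ = (s i * s j) ^ (-(c:ℤ)) * s j * ((s i * s j) ^ (c:ℤ) * s i) * s j := by
          rw [comm_zpow' cs i j, neg_neg]
      _ = (s i * s j) ^ (-(c:ℤ)) * (s j * (s i * s j) ^ (c:ℤ)) * (s i * s j) := by
          group
      _ = (s i * s j) ^ (-(c:ℤ)) * ((s i * s j) ^ (-(c:ℤ)) * s j) * (s i * s j) := by
          rw [comm_zpow cs i j]
      _ = (s i * s j) ^ (-(c:ℤ)) * (s i * s j) ^ (-(c:ℤ)) * (s j * (s i * s j)) := by
          group
      _ = (s i * s j) ^ (-(c:ℤ)) * (s i * s j) ^ (-(c:ℤ)) * ((s i * s j) ^ (-1:ℤ) * s j) := by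
          rw [hq1]
      _ = (s i * s j) ^ ((-(c:ℤ)) + (-(c:ℤ)) + (-1)) * s j := by
          rw [zpow_add, zpow_add]
          group
      _ = (s i * s j) ^ (-(p : ℤ)) * s j := by rw [harith']

/-- Description of the right inversion sequence of an alternating word. -/
lemma ris_alt (p : ℕ) :
    ris (alternatingWord i j p)
      = ((List.range p).map (fun k : ℕ => (s i * s j) ^ (-(k : ℤ)) * s j)).reverse := by
  induction p with
  | zero => simp [rightInvSeq, alternatingWord]
  | succ p ih =>
    rw [alternatingWord_succ' i j p]
    have hcons : ris ((if Even p then j else i) :: alternatingWord i j p)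
        = ((π (alternatingWord i j p))⁻¹ * s (if Even p then j else i)
            * π (alternatingWord i j p)) :: ris (alternatingWord i j p) := rfl
    rw [hcons, e_formula cs i j p, ih, List.range_succ]
    simp

lemma count_even (t : W) :
    Even (List.count t (ris (alternatingWord i j (2 * M i j)))) := by
  rw [ris_alt cs i j, List.count_reverse]
  have h2m : 2 * M i j = M i j + M i j := by omega
  rw [h2m, List.range_add, List.map_append, List.count_append]
  have hq : (s i * s j) ^ ((M i j : ℤ)) = 1 := by
    rw [zpow_natCast, cs.simple_mul_simple_pow]
  have : List.map ((fun k : ℕ => (s i * s j) ^ (-(k : ℤ)) * s j) ∘ (fun x => M i j + x))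
      (List.range (M i j))
      = List.map (fun k : ℕ => (s i * s j) ^ (-(k : ℤ)) * s j) (List.range (M i j)) := by
    apply List.map_congr_left
    intro k _
    simp only [Function.comp_apply]
    have hq1 : (s i * s j) ^ (-(M i j : ℤ)) = 1 := by
      rw [zpow_neg, hq, inv_one]
    have hk : (-(↑(M i j + k) : ℤ)) = (-(k:ℤ)) + (-(M i j : ℤ)) := by push_cast; ring
    rw [hk, zpow_add, hq1, mul_one]
  rw [List.map_map, this]
  exact ⟨_, rfl⟩

lemma prod_map_alt {G : Type*} [Monoid G] (f : B → G) (m : ℕ) :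
    ((alternatingWord i j (2 * m)).map f).prod = (f i * f j) ^ m := by
  induction m with
  | zero => simp [alternatingWord]
  | succ m ih =>
    have h1 : 2 * (m + 1) = (2 * m + 1) + 1 := by omega
    rw [h1, alternatingWord_succ' i j, alternatingWord_succ' i j]
    have he : ¬ Even (2 * m + 1) := by simp [Nat.even_add_one, parity_simps]
    have he2 : Even (2 * m) := ⟨m, by omega⟩
    rw [if_neg he, if_pos he2]
    simp only [List.map_cons, List.prod_cons]
    rw [ih, pow_succ', mul_assoc]

lemma sigma_liftable : M.IsLiftable (sigma cs) := by
  intro i j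
  rw [← prod_map_alt i j (sigma cs) (M i j)]
  ext ⟨t, ε⟩
  · rw [sigmaProd]
    have hπ : π (alternatingWord i j (2 * M i j)) = 1 := by
      rw [cs.prod_alternatingWord_eq_mul_pow, if_pos ⟨M i j, by omega⟩, one_mul,
        (by omega : 2 * M i j / 2 = M i j), cs.simple_mul_simple_pow]
    rw [hπ, Even.neg_one_pow (count_even cs i j t)]
    simp
  · rw [sigmaProd]
    have hπ : π (alternatingWord i j (2 * M i j)) = 1 := by
      rw [cs.prod_alternatingWord_eq_mul_pow, if_pos ⟨M i j, by omega⟩, one_mul,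
        (by omega : 2 * M i j / 2 = M i j), cs.simple_mul_simple_pow]
    rw [hπ, Even.neg_one_pow (count_even cs i j t)]
    simp

end Dihedral

section Rho

/-- The reflection-sign representation. -/
noncomputable def rho : W →* Equiv.Perm (W × ℤˣ) := cs.lift ⟨sigma cs, sigma_liftable cs⟩

lemma rho_simple (i : B) : rho cs (s i) = sigma cs i :=
  cs.lift_apply_simple (sigma_liftable cs) i

lemma rho_wordProd (ω : List B) : rho cs (π ω) = (ω.map (sigma cs)).prod := by
  induction ω with
  | nil => simp
  | cons i ω ih =>
    rw [cs.wordProd_cons, map_mul, rho_simple, ih, List.map_cons, List.prod_cons]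

/-- The sign of a potential inversion. -/
noncomputable def Fsgn (x t : W) : ℤˣ := ((rho cs x) (t, 1)).2

lemma Fsgn_wordProd (ω : List B) (t : W) :
    Fsgn cs (π ω) t = (-1 : ℤˣ) ^ (List.count t (ris ω)) := by
  rw [Fsgn, rho_wordProd, sigmaProd]
  simp

lemma rho_apply (x t : W) (ε : ℤˣ) : rho cs x (t, ε) = (x * t * x⁻¹, ε * Fsgn cs x t) := by
  obtain ⟨ω, rfl⟩ := cs.wordProd_surjective x
  rw [rho_wordProd, sigmaProd, Fsgn_wordProd]

lemma Fsgn_mul (x y r : W) :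
    Fsgn cs (x * y) r = Fsgn cs y r * Fsgn cs x (y * r * y⁻¹) := by
  have h : rho cs (x * y) (r, 1) = rho cs x (rho cs y (r, 1)) := by
    rw [map_mul]
    rfl
  rw [Fsgn, h, rho_apply cs y r 1, rho_apply, one_mul]

lemma Fsgn_simple (i : B) (t : W) :
    Fsgn cs (s i) t = if t = s i then -1 else 1 := by
  rw [Fsgn, rho_simple, sigma_apply]
  simp

lemma Fsgn_simple_mul (j : B) (y r : W) :
    Fsgn cs (s j * y) r = Fsgn cs y r * (if y * r * y⁻¹ = s j then -1 else 1) := by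
  rw [Fsgn_mul, Fsgn_simple]

lemma Fsgn_mul_simple (j : B) (y r : W) :
    Fsgn cs (y * s j) r = (if r = s j then -1 else 1) * Fsgn cs y (s j * r * s j) := by
  rw [Fsgn_mul, Fsgn_simple, cs.inv_simple, mul_comm]

lemma Fsgn_refl_self_aux : ∀ (a : List B) (i : B),
    Fsgn cs (π a * s i * (π a)⁻¹) (π a * s i * (π a)⁻¹) = -1 := by
  intro a
  induction a with
  | nil =>
    intro i
    simp [Fsgn_simple]
  | cons j a ih =>
    intro i
    set t' : W := π a * s i * (π a)⁻¹ with ht'def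
    have hrefl' : cs.IsReflection t' := ⟨π a, i, rfl⟩
    have hts : π (j :: a) * s i * (π (j :: a))⁻¹ = s j * t' * s j := by
      rw [cs.wordProd_cons, ht'def, mul_inv_rev, cs.inv_simple]
      group
    rw [hts]
    set t : W := s j * t' * s j with htdef
    have htt' : t = s j * (t' * s j) := by rw [htdef]; group
    have hconj : (t' * s j) * t * (t' * s j)⁻¹ = t' := by
      rw [htdef, mul_inv_rev, cs.inv_simple]
      calc t' * s j * (s j * t' * s j) * (s j * t'⁻¹)
          = t' * (s j * s j) * t' * (s j * s j) * t'⁻¹ := by group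
        _ = t' * t' * t'⁻¹ := by rw [cs.simple_mul_simple_self, mul_one, mul_one]
        _ = t' := by group
    rw [htt', Fsgn_simple_mul, ← htt', hconj, Fsgn_mul_simple]
    have hst : s j * t * s j = t' := by
      rw [htdef]
      calc s j * (s j * t' * s j) * s j = (s j * s j) * t' * (s j * s j) := by group
        _ = t' := by rw [cs.simple_mul_simple_self, one_mul, mul_one]
    rw [hst, ih i]
    have hiff : (t = s j) ↔ (t' = s j) := by
      constructor
      · intro h
        rw [← hst, h, cs.simple_mul_simple_self, one_mul]
      · intro h
        rw [htdef, h, cs.simple_mul_simple_self, one_mul]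
    by_cases h : t' = s j
    · rw [if_pos h, if_pos (hiff.mpr h)]
      simp
    · rw [if_neg h, if_neg (fun hh => h (hiff.mp hh))]
      simp

lemma Fsgn_refl_self {t : W} (ht : cs.IsReflection t) : Fsgn cs t t = -1 := by
  obtain ⟨u, i, rfl⟩ := ht
  obtain ⟨a, rfl⟩ := cs.wordProd_surjective u
  exact Fsgn_refl_self_aux cs a i

lemma isRightInversion_of_Fsgn {x t : W} (h : Fsgn cs x t = -1) :
    cs.IsRightInversion x t := by
  obtain ⟨ω, hred, rfl⟩ := cs.exists_reduced_word' x
  rw [Fsgn_wordProd] at h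
  have hodd : ¬ Even (List.count t (ris ω)) := by
    intro heven
    rw [Even.neg_one_pow heven] at h
    exact (by decide : (1 : ℤˣ) ≠ -1) h
  have hne : List.count t (ris ω) ≠ 0 := fun h0 => hodd (by rw [h0]; exact Even.zero)
  have hmem : t ∈ ris ω := List.count_pos_iff.mp (Nat.pos_of_ne_zero hne)
  exact cs.isRightInversion_of_mem_rightInvSeq hred hmem

lemma isRightInversion_iff_Fsgn {x t : W} (ht : cs.IsReflection t) :
    cs.IsRightInversion x t ↔ Fsgn cs x t = -1 := by
  constructor
  · intro h
    have hF : Fsgn cs x t = - Fsgn cs (x * t) t := by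
      nth_rewrite 1 [show x = (x * t) * t by rw [mul_assoc, ht.mul_self, mul_one]]
      rw [Fsgn_mul, ht.inv, ht.mul_self, one_mul, Fsgn_refl_self cs ht, neg_one_mul]
    rcases Int.units_eq_one_or (Fsgn cs (x * t) t) with h1 | h1
    · rw [hF, h1]
    · exfalso
      have hinv := (isRightInversion_of_Fsgn cs h1).2
      rw [mul_assoc, ht.mul_self, mul_one] at hinv
      exact Nat.lt_asymm h.2 hinv
  · exact isRightInversion_of_Fsgn cs

end Rho

section Left

lemma ncard_rightInversions (x : W) : {t : W | cs.IsRightInversion x t}.ncard = ℓ x := by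
  obtain ⟨ω, hred, rfl⟩ := cs.exists_reduced_word' x
  have hset : {t : W | cs.IsRightInversion (π ω) t} = ((ris ω).toFinset : Set W) := by
    ext t
    simp only [Set.mem_setOf_eq, Finset.mem_coe, List.mem_toFinset]
    constructor
    · intro h
      have hF := (isRightInversion_iff_Fsgn cs h.1).mp h
      rw [Fsgn_wordProd] at hF
      have hodd : ¬ Even (List.count t (ris ω)) := by
        intro heven
        rw [Even.neg_one_pow heven] at hF
        exact (by decide : (1 : ℤˣ) ≠ -1) hF
      have hne : List.count t (ris ω) ≠ 0 := fun h0 => hodd (by rw [h0]; exact Even.zero)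
      exact List.count_pos_iff.mp (Nat.pos_of_ne_zero hne)
    · intro h
      exact cs.isRightInversion_of_mem_rightInvSeq hred h
  rw [hset, Set.ncard_coe_finset, List.toFinset_card_of_nodup hred.nodup_rightInvSeq,
    cs.length_rightInvSeq]
  exact hred.symm

/-- Left-handed sign function. -/
noncomputable def FL (x t : W) : ℤˣ := Fsgn cs x⁻¹ t

lemma isLeftInversion_iff_FL {x t : W} (ht : cs.IsReflection t) :
    cs.IsLeftInversion x t ↔ FL cs x t = -1 := by
  rw [← cs.isRightInversion_inv_iff, isRightInversion_iff_Fsgn cs ht, FL]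

lemma ncard_leftInversions (x : W) : {t : W | cs.IsLeftInversion x t}.ncard = ℓ x := by
  have hset : {t : W | cs.IsLeftInversion x t} = {t : W | cs.IsRightInversion x⁻¹ t} := by
    ext t
    simp only [Set.mem_setOf_eq]
    exact (cs.isRightInversion_inv_iff).symm
  rw [hset, ncard_rightInversions, cs.length_inv]

lemma FL_simple_mul (j : B) (x r : W) :
    FL cs (s j * x) r = (if r = s j then -1 else 1) * FL cs x (s j * r * s j) := by
  rw [FL, mul_inv_rev, cs.inv_simple, Fsgn_mul_simple, FL]

lemma FL_mul_simple (j : B) (x r : W) :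
    FL cs (x * s j) r = FL cs x r * (if r = x * s j * x⁻¹ then -1 else 1) := by
  rw [FL, mul_inv_rev, cs.inv_simple, Fsgn_simple_mul, FL]
  congr 1
  have hiff : (x⁻¹ * r * x⁻¹⁻¹ = s j) ↔ (r = x * s j * x⁻¹) := by
    constructor
    · intro h
      have := congrArg (fun z => x * z * x⁻¹) h
      simpa [mul_assoc] using this
    · intro h
      rw [h]
      group
  by_cases h : r = x * s j * x⁻¹
  · rw [if_pos h, if_pos (hiff.mpr h)]
  · rw [if_neg h, if_neg (fun hh => h (hiff.mp hh))]

end Left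

section Main

/-- The set of reflections moving `x` down and out of `X`. -/
def outS (X : Set W) (x : W) : Set W := {t : W | cs.IsLeftInversion x t ∧ t * x ∉ X}

lemma step_left_eq (X : Set W) (i : B) (hcl : ∀ y : W, y ∈ X ↔ s i * y ∈ X)
    (x : W) (hx : x ∈ X) :
    outS cs X (s i * x) = (fun t => s i * t * s i) '' outS cs X x := by
  ext t
  simp only [outS, Set.mem_setOf_eq, Set.mem_image]
  constructor
  · rintro ⟨⟨htrefl, htlt⟩, htout⟩
    have htne : t ≠ s i := by
      rintro rfl
      apply htout
      rw [cs.simple_mul_simple_cancel_left]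
      exact hx
    set r : W := s i * t * s i with hrdef
    have hrrefl : cs.IsReflection r := by
      have := htrefl.conj (s i)
      rwa [cs.inv_simple] at this
    have hFL : FL cs (s i * x) t = -1 := (isLeftInversion_iff_FL cs htrefl).mp ⟨htrefl, htlt⟩
    rw [FL_simple_mul, if_neg htne, one_mul] at hFL
    have hILI : cs.IsLeftInversion x r := (isLeftInversion_iff_FL cs hrrefl).mpr hFL
    refine ⟨r, ⟨hILI, ?_⟩, ?_⟩
    · intro hmem
      apply htout
      have h1 : r * x = s i * (t * (s i * x)) := by rw [hrdef]; group
      rw [h1] at hmem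
      exact (hcl (t * (s i * x))).mpr hmem
    · rw [hrdef]
      calc s i * (s i * t * s i) * s i = (s i * s i) * t * (s i * s i) := by group
        _ = t := by rw [cs.simple_mul_simple_self, one_mul, mul_one]
  · rintro ⟨r, ⟨⟨hrrefl, hrlt⟩, hrout⟩, rfl⟩
    have hrne : r ≠ s i := by
      rintro rfl
      exact hrout ((hcl x).mp hx)
    have htrefl : cs.IsReflection (s i * r * s i) := by
      have := hrrefl.conj (s i)
      rwa [cs.inv_simple] at this
    have htne : s i * r * s i ≠ s i := by
      intro h
      apply hrne
      have := congrArg (fun z => s i * z * s i) h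
      calc r = (s i * s i) * r * (s i * s i) := by
            rw [cs.simple_mul_simple_self, one_mul, mul_one]
        _ = s i * (s i * r * s i) * s i := by group
        _ = s i * s i * s i := by rw [h]
        _ = s i := by rw [cs.simple_mul_simple_self, one_mul]
    have hback : s i * (s i * r * s i) * s i = r := by
      calc s i * (s i * r * s i) * s i = (s i * s i) * r * (s i * s i) := by group
        _ = r := by rw [cs.simple_mul_simple_self, one_mul, mul_one]
    have hFL : FL cs (s i * x) (s i * r * s i) = -1 := by
      rw [FL_simple_mul, if_neg htne, one_mul, hback]
      exact (isLeftInversion_iff_FL cs hrrefl).mp ⟨hrrefl, hrlt⟩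
    refine ⟨(isLeftInversion_iff_FL cs htrefl).mpr hFL, ?_⟩
    intro hmem
    apply hrout
    have h1 : s i * r * s i * (s i * x) = s i * (r * x) := by
      calc s i * r * s i * (s i * x) = s i * r * (s i * s i) * x := by group
        _ = s i * (r * x) := by rw [cs.simple_mul_simple_self, mul_one]; group
    rw [h1] at hmem
    exact (hcl (r * x)).mpr hmem

lemma conj_simple_injective (i : B) : Function.Injective (fun t : W => s i * t * s i) := by
  intro a b h
  simp only at h
  calc a = (s i * s i) * a * (s i * s i) := by rw [cs.simple_mul_simple_self, one_mul, mul_one]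
    _ = s i * (s i * a * s i) * s i := by group
    _ = s i * (s i * b * s i) * s i := by rw [h]
    _ = (s i * s i) * b * (s i * s i) := by group
    _ = b := by rw [cs.simple_mul_simple_self, one_mul, mul_one]

lemma step_left (X : Set W) (i : B) (hcl : ∀ y : W, y ∈ X ↔ s i * y ∈ X)
    (x : W) (hx : x ∈ X) :
    (outS cs X (s i * x)).ncard = (outS cs X x).ncard := by
  rw [step_left_eq cs X i hcl x hx]
  exact Set.ncard_image_of_injective _ (conj_simple_injective cs i)

lemma step_right_eq (X : Set W) (j : B) (hcl : ∀ y : W, y ∈ X ↔ y * s j ∈ X)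
    (x : W) (hx : x ∈ X) :
    outS cs X (x * s j) = outS cs X x := by
  ext t
  simp only [outS, Set.mem_setOf_eq]
  constructor
  · rintro ⟨⟨htrefl, htlt⟩, htout⟩
    have htne : t ≠ x * s j * x⁻¹ := by
      rintro rfl
      apply htout
      have h1 : x * s j * x⁻¹ * (x * s j) = x * (s j * s j) := by group
      rw [h1, cs.simple_mul_simple_self, mul_one]
      exact hx
    have hFL : FL cs (x * s j) t = -1 :=
      (isLeftInversion_iff_FL cs htrefl).mp ⟨htrefl, htlt⟩
    rw [FL_mul_simple, if_neg htne, mul_one] at hFL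
    refine ⟨(isLeftInversion_iff_FL cs htrefl).mpr hFL, ?_⟩
    intro hmem
    apply htout
    rw [← mul_assoc]
    exact (hcl (t * x)).mp hmem
  · rintro ⟨⟨htrefl, htlt⟩, htout⟩
    have htne : t ≠ x * s j * x⁻¹ := by
      rintro rfl
      apply htout
      have h1 : x * s j * x⁻¹ * x = x * s j := by group
      rw [h1]
      exact (hcl x).mp hx
    have hFL : FL cs (x * s j) t = -1 := by
      rw [FL_mul_simple, if_neg htne, mul_one]
      exact (isLeftInversion_iff_FL cs htrefl).mp ⟨htrefl, htlt⟩
    refine ⟨(isLeftInversion_iff_FL cs htrefl).mpr hFL, ?_⟩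
    intro hmem
    apply htout
    rw [← mul_assoc] at hmem
    exact (hcl (t * x)).mpr hmem

lemma step_right (X : Set W) (j : B) (hcl : ∀ y : W, y ∈ X ↔ y * s j ∈ X)
    (x : W) (hx : x ∈ X) :
    (outS cs X (x * s j)).ncard = (outS cs X x).ncard := by
  rw [step_right_eq cs X j hcl x hx]

lemma invariant_left (X : Set W) (I : Set B)
    (hXcl : ∀ i ∈ I, ∀ y : W, y ∈ X ↔ s i * y ∈ X)
    {u : W} (hu : u ∈ Subgroup.closure (cs.simple '' I)) :
    ∀ y ∈ X, u * y ∈ X ∧ (outS cs X (u * y)).ncard = (outS cs X y).ncard := by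
  have main : (∀ y ∈ X, u * y ∈ X ∧ (outS cs X (u * y)).ncard = (outS cs X y).ncard)
      ∧ (∀ y ∈ X, u⁻¹ * y ∈ X ∧ (outS cs X (u⁻¹ * y)).ncard = (outS cs X y).ncard) := by
    induction hu using Subgroup.closure_induction with
    | mem g hg =>
      obtain ⟨i, hi, rfl⟩ := hg
      have hbase : ∀ y ∈ X, s i * y ∈ X ∧ (outS cs X (s i * y)).ncard = (outS cs X y).ncard :=
        fun y hy => ⟨(hXcl i hi y).mp hy, step_left cs X i (hXcl i hi) y hy⟩
      refine ⟨hbase, ?_⟩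
      rwa [cs.inv_simple]
    | one =>
      constructor <;> (intro y hy; simp [hy])
    | mul a b ha hb pa pb =>
      constructor
      · intro y hy
        have h1 := pb.1 y hy
        have h2 := pa.1 (b * y) h1.1
        rw [mul_assoc]
        exact ⟨h2.1, h2.2.trans h1.2⟩
      · intro y hy
        have h1 := pa.2 y hy
        have h2 := pb.2 (a⁻¹ * y) h1.1
        rw [mul_inv_rev, mul_assoc]
        exact ⟨h2.1, h2.2.trans h1.2⟩
    | inv a ha pa =>
      refine ⟨pa.2, ?_⟩
      simpa using pa.1
  exact main.1

lemma invariant_right (X : Set W) (J : Set B)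
    (hXcl : ∀ j ∈ J, ∀ y : W, y ∈ X ↔ y * s j ∈ X)
    {u : W} (hu : u ∈ Subgroup.closure (cs.simple '' J)) :
    ∀ y ∈ X, y * u ∈ X ∧ (outS cs X (y * u)).ncard = (outS cs X y).ncard := by
  have main : (∀ y ∈ X, y * u ∈ X ∧ (outS cs X (y * u)).ncard = (outS cs X y).ncard)
      ∧ (∀ y ∈ X, y * u⁻¹ ∈ X ∧ (outS cs X (y * u⁻¹)).ncard = (outS cs X y).ncard) := by
    induction hu using Subgroup.closure_induction with
    | mem g hg =>
      obtain ⟨j, hj, rfl⟩ := hg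
      have hbase : ∀ y ∈ X, y * s j ∈ X ∧ (outS cs X (y * s j)).ncard = (outS cs X y).ncard :=
        fun y hy => ⟨(hXcl j hj y).mp hy, step_right cs X j (hXcl j hj) y hy⟩
      refine ⟨hbase, ?_⟩
      rwa [cs.inv_simple]
    | one =>
      constructor <;> (intro y hy; simp [hy])
    | mul a b ha hb pa pb =>
      constructor
      · intro y hy
        have h1 := pa.1 y hy
        have h2 := pb.1 (y * a) h1.1
        rw [← mul_assoc]
        exact ⟨h2.1, h2.2.trans h1.2⟩
      · intro y hy
        have h1 := pb.2 y hy
        have h2 := pa.2 (y * b⁻¹) h1.1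
        rw [mul_inv_rev, ← mul_assoc]
        exact ⟨h2.1, h2.2.trans h1.2⟩
    | inv a ha pa =>
      refine ⟨pa.2, ?_⟩
      simpa using pa.1
  exact main.1

end Main

end InDegreeAux


/-- Every element of the double coset `W_{D_L(w)} w W_{D_R(w)}` has exactly `ℓ(x₀)` incoming
Bruhat edges from outside the coset, where `x₀` is the minimal-length element of the coset. -/
theorem in_degree_from_outside [Finite W]
    (cs : CoxeterSystem M W) (w : W) (x₀ : W)
    (hx₀ : x₀ ∈ doubleCoset cs {i : B | cs.IsLeftDescent w i} {i : B | cs.IsRightDescent w i} w)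
    (hmin : ∀ y ∈ doubleCoset cs {i : B | cs.IsLeftDescent w i}
      {i : B | cs.IsRightDescent w i} w, cs.length x₀ ≤ cs.length y) :
    ∀ x ∈ doubleCoset cs {i : B | cs.IsLeftDescent w i} {i : B | cs.IsRightDescent w i} w,
      Set.ncard {y : W |
          y ∉ doubleCoset cs {i : B | cs.IsLeftDescent w i} {i : B | cs.IsRightDescent w i} w ∧
          bruhatEdge cs y x} = cs.length x₀ := by
  classical
  intro x hx
  set I : Set B := {i : B | cs.IsLeftDescent w i} with hI
  set J : Set B := {i : B | cs.IsRightDescent w i} with hJ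
  set X : Set W := doubleCoset cs I J w with hXdef
  have hXmulL : ∀ i ∈ I, ∀ y : W, y ∈ X → cs.simple i * y ∈ X := by
    rintro i hi y ⟨u, hu, v, hv, rfl⟩
    exact ⟨cs.simple i * u, mul_mem (Subgroup.subset_closure ⟨i, hi, rfl⟩) hu, v, hv, by group⟩
  have hXclL : ∀ i ∈ I, ∀ y : W, y ∈ X ↔ cs.simple i * y ∈ X := by
    intro i hi y
    constructor
    · exact hXmulL i hi y
    · intro h
      have h2 := hXmulL i hi _ h
      rwa [cs.simple_mul_simple_cancel_left] at h2
  have hXmulR : ∀ j ∈ J, ∀ y : W, y ∈ X → y * cs.simple j ∈ X := by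
    rintro j hj y ⟨u, hu, v, hv, rfl⟩
    refine ⟨u, hu, v * cs.simple j, mul_mem hv (Subgroup.subset_closure ⟨j, hj, rfl⟩), by group⟩
  have hXclR : ∀ j ∈ J, ∀ y : W, y ∈ X ↔ y * cs.simple j ∈ X := by
    intro j hj y
    constructor
    · exact hXmulR j hj y
    · intro h
      have h2 := hXmulR j hj _ h
      rwa [cs.simple_mul_simple_cancel_right] at h2
  have hwX : w ∈ X := ⟨1, one_mem _, 1, one_mem _, by group⟩
  have key : ∀ z ∈ X, (InDegreeAux.outS cs X z).ncard = (InDegreeAux.outS cs X w).ncard := by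
    rintro z ⟨u, hu, v, hv, rfl⟩
    have h1 := InDegreeAux.invariant_right cs X J hXclR hv w hwX
    have h2 := InDegreeAux.invariant_left cs X I hXclL hu (w * v) h1.1
    rw [mul_assoc]
    exact h2.2.trans h1.2
  have hbase : (InDegreeAux.outS cs X x₀).ncard = cs.length x₀ := by
    have hset : InDegreeAux.outS cs X x₀ = {t : W | cs.IsLeftInversion x₀ t} := by
      ext t
      simp only [InDegreeAux.outS, Set.mem_setOf_eq, and_iff_left_iff_imp]
      intro ht hmem
      have h1 := hmin _ hmem
      have h2 := ht.2
      omega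
    rw [hset, InDegreeAux.ncard_leftInversions]
  have hEx : {y : W | y ∉ X ∧ bruhatEdge cs y x} = (fun t => t * x) '' InDegreeAux.outS cs X x := by
    ext y
    simp only [Set.mem_setOf_eq, Set.mem_image, InDegreeAux.outS]
    constructor
    · rintro ⟨hyout, t, htrefl, hxty, hylen⟩
      have hytx : t * x = y := by
        rw [hxty, ← mul_assoc, htrefl.mul_self, one_mul]
      refine ⟨t, ⟨⟨htrefl, ?_⟩, ?_⟩, hytx⟩
      · rw [hytx]
        exact hylen
      · rwa [hytx]
    · rintro ⟨t, ⟨⟨htrefl, htlt⟩, htout⟩, rfl⟩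
      exact ⟨htout, t, htrefl, by rw [← mul_assoc, htrefl.mul_self, one_mul], htlt⟩
  rw [hEx, Set.ncard_image_of_injective _ (fun a b h => mul_right_cancel h),
    key x hx, ← key x₀ hx₀, hbase]
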